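/- arXiv:math/0503525 — 3 statements merged into one kernel-verified Lean document; each statement's English description precedes it below -/
import Mathlib

section
/- Fix d ≥ 1 and φ > 0, and suppose λ : ℕ → (0,∞) satisfies lim_{N→∞} λ(N)/N^{1/(1+φ)} = 0. Then lim sup_{N→∞} m(N) < 1, where m(N) = 2dλ(N) · ∏_{i=1}^{N-1} (iφ + 2dλ(N))/(1 + iφ + 2dλ(N)); in fact m(N) → 0 as N → ∞. -/
open Filter

private lemma step_lemma (phi a : ℝ) (hphi : 0 < phi) (ha : 0 < a) :
    (a - 1) / a ≤ (a / (a + phi)) ^ (1 / phi : ℝ) := by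
  have hpa : 0 < a + phi := by linarith
  have hfrac : 0 < a / (a + phi) := div_pos ha hpa
  have h1 : (a - 1) / a ≤ Real.exp (-(1 / a)) := by
    have h := Real.add_one_le_exp (-(1 / a))
    have h2 : (a - 1) / a = 1 - 1 / a := by field_simp
    linarith
  have hlog : Real.log ((a + phi) / a) ≤ phi / a := by
    have h := Real.log_le_sub_one_of_pos (show (0:ℝ) < (a + phi) / a by positivity)
    have h2 : (a + phi) / a - 1 = phi / a := by field_simp; ring
    linarith
  have hlogneg : Real.log (a / (a + phi)) = -Real.log ((a + phi) / a) := by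
    rw [Real.log_div ha.ne' hpa.ne', Real.log_div hpa.ne' ha.ne']; ring
  have h3 : -(1 / a) ≤ Real.log (a / (a + phi)) * (1 / phi) := by
    rw [hlogneg]
    have hmul : Real.log ((a + phi) / a) * (1 / phi) ≤ (phi / a) * (1 / phi) :=
      mul_le_mul_of_nonneg_right hlog (by positivity)
    have hq : (phi / a) * (1 / phi) = 1 / a := by
      rw [div_mul_div_comm, mul_one]
      rw [mul_comm a phi, ← div_div, div_self hphi.ne']
    rw [hq] at hmul
    linarith
  calc (a - 1) / a ≤ Real.exp (-(1 / a)) := h1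
    _ ≤ Real.exp (Real.log (a / (a + phi)) * (1 / phi)) := Real.exp_le_exp.mpr h3
    _ = (a / (a + phi)) ^ (1 / phi : ℝ) := (Real.rpow_def_of_pos hfrac _).symm

private lemma prod_bound (phi c : ℝ) (hphi : 0 < phi) (hc : 0 < c) (n : ℕ) :
    ∏ i ∈ Finset.Icc 1 n, ((i : ℝ) * phi + c) / (1 + (i : ℝ) * phi + c)
      ≤ ((1 + phi + c) / (1 + ((n : ℝ) + 1) * phi + c)) ^ (1 / phi : ℝ) := by
  induction n with
  | zero =>
    simp only [Nat.cast_zero, zero_add, one_mul]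
    rw [Finset.Icc_eq_empty (by omega), Finset.prod_empty, div_self (by positivity),
      Real.one_rpow]
  | succ n ih =>
    rw [Finset.prod_Icc_succ_top (by omega)]
    set a : ℝ := 1 + ((n : ℝ) + 1) * phi + c with ha_def
    have ha : 0 < a := by positivity
    have hfactor : ((n + 1 : ℕ) : ℝ) * phi + c = a - 1 := by push_cast; ring
    have hden : 1 + ((n + 1 : ℕ) : ℝ) * phi + c = a := by push_cast [ha_def]; ring
    have key := step_lemma phi a hphi ha
    have hstep : (((n + 1 : ℕ) : ℝ) * phi + c) / (1 + ((n + 1 : ℕ) : ℝ) * phi + c)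
        ≤ (a / (a + phi)) ^ (1 / phi : ℝ) := by rw [hfactor, hden]; exact key
    have hprod_nonneg : (0:ℝ) ≤ ∏ i ∈ Finset.Icc 1 n,
        ((i : ℝ) * phi + c) / (1 + (i : ℝ) * phi + c) := by
      apply Finset.prod_nonneg
      intro i hi
      have hi1 : 1 ≤ i := (Finset.mem_Icc.mp hi).1
      have : (0:ℝ) ≤ (i : ℝ) := Nat.cast_nonneg i
      positivity
    have hfact_nonneg : (0:ℝ) ≤ (((n + 1 : ℕ) : ℝ) * phi + c) / (1 + ((n + 1 : ℕ) : ℝ) * phi + c) := by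
      positivity
    have hXnn : (0:ℝ) ≤ (1 + phi + c) / a := by positivity
    calc (∏ i ∈ Finset.Icc 1 n, ((i : ℝ) * phi + c) / (1 + (i : ℝ) * phi + c)) *
          ((((n + 1 : ℕ) : ℝ) * phi + c) / (1 + ((n + 1 : ℕ) : ℝ) * phi + c))
        ≤ ((1 + phi + c) / a) ^ (1 / phi : ℝ) * (a / (a + phi)) ^ (1 / phi : ℝ) := by
          apply mul_le_mul ih hstep hfact_nonneg (Real.rpow_nonneg hXnn _)
      _ = (((1 + phi + c) / a) * (a / (a + phi))) ^ (1 / phi : ℝ) := by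
          rw [← Real.mul_rpow hXnn (by positivity)]
      _ = ((1 + phi + c) / (1 + (((n + 1 : ℕ) : ℝ) + 1) * phi + c)) ^ (1 / phi : ℝ) := by
          congr 1
          have haphi : a + phi = 1 + (((n + 1 : ℕ) : ℝ) + 1) * phi + c := by
            push_cast [ha_def]; ring
          rw [← haphi]
          field_simp
      _ = ((1 + phi + c) / (1 + (((n + 1 : ℕ) : ℝ) + 1) * phi + c)) ^ (1 / phi : ℝ) := by
          norm_num

/-- Corollary 1 (calculus content): if `λ(N)/N^{1/(1+φ)} → 0` with `φ > 0`, then the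
mean offspring number `m(N) = 2dλ(N) ∏_{i=1}^{N-1} (iφ+2dλ(N))/(1+iφ+2dλ(N))` tends
to `0` (in particular `limsup m(N) < 1`). -/
theorem mean_offspring_tendsto_zero
    (d : ℕ) (hd : 1 ≤ d) (phi : ℝ) (hphi : 0 < phi)
    (lam : ℕ → ℝ) (hlam : ∀ N, 0 < lam N)
    (hlim : Tendsto (fun N : ℕ => lam N / (N : ℝ) ^ (1 / (1 + phi))) atTop (nhds 0)) :
    Tendsto (fun N : ℕ =>
        2 * d * lam N * ∏ i ∈ Finset.Icc 1 (N - 1),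
          (i * phi + 2 * d * lam N) / (1 + i * phi + 2 * d * lam N))
      atTop (nhds 0) := by
  set β : ℝ := 1 / (1 + phi) with hβ
  set K : ℝ := ((2 + phi) / phi) ^ (1 / phi : ℝ) with hK
  have hKpos : 0 < K := Real.rpow_pos_of_pos (by positivity) _
  have hd' : (0:ℝ) < 2 * d := by
    have : (1:ℝ) ≤ (d : ℝ) := by exact_mod_cast hd
    linarith
  -- the dominating sequence
  have hg : Tendsto (fun N : ℕ => K * (2 * d) * (lam N / (N : ℝ) ^ β)) atTop (nhds 0) := by
    have := hlim.const_mul (K * (2 * d))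
    simpa using this
  -- eventual bound
  have hsmall : ∀ᶠ N : ℕ in atTop, lam N / (N : ℝ) ^ β < 1 / (2 * d) :=
    hlim.eventually (gt_mem_nhds (show (0:ℝ) < 1 / (2 * d) by positivity))
  have hub : ∀ᶠ N : ℕ in atTop,
      2 * d * lam N * ∏ i ∈ Finset.Icc 1 (N - 1),
          ((i : ℝ) * phi + 2 * d * lam N) / (1 + (i : ℝ) * phi + 2 * d * lam N)
        ≤ K * (2 * d) * (lam N / (N : ℝ) ^ β) := by
    filter_upwards [hsmall, eventually_ge_atTop 1] with N hs hN1
    set c : ℝ := 2 * d * lam N with hc_def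
    have hc : 0 < c := mul_pos hd' (hlam N)
    have hNR : (1:ℝ) ≤ (N : ℝ) := by exact_mod_cast hN1
    have hNpos : (0:ℝ) < (N : ℝ) := by linarith
    have hNβpos : (0:ℝ) < (N : ℝ) ^ β := Real.rpow_pos_of_pos hNpos _
    have hNβ1 : (1:ℝ) ≤ (N : ℝ) ^ β := Real.one_le_rpow hNR (by positivity)
    have hcNβ : c ≤ (N : ℝ) ^ β := by
      have h1 : lam N < (N : ℝ) ^ β / (2 * d) := (div_lt_iff₀ hNβpos).mp hs |>.trans_le
        (by rw [div_mul_eq_mul_div]; exact le_of_eq (by ring))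
      calc c = 2 * d * lam N := rfl
        _ ≤ 2 * d * ((N : ℝ) ^ β / (2 * d)) := by nlinarith
        _ = (N : ℝ) ^ β := by field_simp
    -- product bound with n = N - 1
    have hcast : ((N - 1 : ℕ) : ℝ) + 1 = (N : ℝ) := by
      have : N - 1 + 1 = N := by omega
      exact_mod_cast congrArg (Nat.cast : ℕ → ℝ) this
    have hP : ∏ i ∈ Finset.Icc 1 (N - 1),
        ((i : ℝ) * phi + c) / (1 + (i : ℝ) * phi + c)
        ≤ ((1 + phi + c) / (1 + (N : ℝ) * phi + c)) ^ (1 / phi : ℝ) := by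
      have := prod_bound phi c hphi hc (N - 1)
      rwa [hcast] at this
    -- bound the ratio
    have hR : (1 + phi + c) / (1 + (N : ℝ) * phi + c)
        ≤ ((2 + phi) / phi) * (N : ℝ) ^ (β - 1) := by
      have hnum : 1 + phi + c ≤ (2 + phi) * (N : ℝ) ^ β := by nlinarith
      have hden : (N : ℝ) * phi ≤ 1 + (N : ℝ) * phi + c := by linarith
      have h1 : (1 + phi + c) / (1 + (N : ℝ) * phi + c)
          ≤ ((2 + phi) * (N : ℝ) ^ β) / ((N : ℝ) * phi) :=
        div_le_div₀ (by positivity) hnum (by positivity) hden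
      have h2 : ((2 + phi) * (N : ℝ) ^ β) / ((N : ℝ) * phi)
          = ((2 + phi) / phi) * (N : ℝ) ^ (β - 1) := by
        rw [Real.rpow_sub hNpos, Real.rpow_one]
        field_simp
      linarith [h2 ▸ h1]
    have hRnn : (0:ℝ) ≤ (1 + phi + c) / (1 + (N : ℝ) * phi + c) := by positivity
    have hRp : ((1 + phi + c) / (1 + (N : ℝ) * phi + c)) ^ (1 / phi : ℝ)
        ≤ K * (N : ℝ) ^ (-β) := by
      have h1 : ((1 + phi + c) / (1 + (N : ℝ) * phi + c)) ^ (1 / phi : ℝ)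
          ≤ (((2 + phi) / phi) * (N : ℝ) ^ (β - 1)) ^ (1 / phi : ℝ) :=
        Real.rpow_le_rpow hRnn hR (by positivity)
      have hexp : (β - 1) * (1 / phi) = -β := by
        rw [hβ]
        field_simp
        ring
      have h2 : (((2 + phi) / phi) * (N : ℝ) ^ (β - 1)) ^ (1 / phi : ℝ)
          = K * (N : ℝ) ^ (-β) := by
        rw [Real.mul_rpow (by positivity) (by positivity), ← Real.rpow_mul hNpos.le, hexp, hK]
      linarith
    have hPnn : (0:ℝ) ≤ ∏ i ∈ Finset.Icc 1 (N - 1),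
        ((i : ℝ) * phi + c) / (1 + (i : ℝ) * phi + c) := by
      apply Finset.prod_nonneg
      intro i hi
      have : (0:ℝ) ≤ (i : ℝ) := Nat.cast_nonneg i
      positivity
    calc c * ∏ i ∈ Finset.Icc 1 (N - 1),
          ((i : ℝ) * phi + c) / (1 + (i : ℝ) * phi + c)
        ≤ c * (K * (N : ℝ) ^ (-β)) := by
          apply mul_le_mul_of_nonneg_left (hP.trans hRp) hc.le
      _ = K * (2 * d) * (lam N / (N : ℝ) ^ β) := by
          rw [Real.rpow_neg hNpos.le, hc_def]
          field_simp
  have hlb : ∀ᶠ N : ℕ in atTop,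
      (0:ℝ) ≤ 2 * d * lam N * ∏ i ∈ Finset.Icc 1 (N - 1),
          ((i : ℝ) * phi + 2 * d * lam N) / (1 + (i : ℝ) * phi + 2 * d * lam N) := by
    filter_upwards with N
    have h0 : (0:ℝ) ≤ 2 * d * lam N := (mul_pos hd' (hlam N)).le
    apply mul_nonneg h0
    apply Finset.prod_nonneg
    intro i hi
    have : (0:ℝ) ≤ (i : ℝ) := Nat.cast_nonneg i
    have := (hlam N).le
    positivity
  exact squeeze_zero' hlb hub hg
end

section
/- Fix φ ≥ 0, d ≥ 1, and suppose λ(N) = c·N^b with c > 0 and b < 1/(1+φ) when φ > 0. Then 2dλ(N)·∏_{i=1}^{N-1}(iφ+2dλ(N))/(1+iφ+2dλ(N)) → 0 as N → ∞. In particular, for a polynomially growing external birth rate with exponent below 1/(1+φ), the mean offspring number is eventually below 1. -/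
open Filter Finset


lemma factor_le_exp (x : ℝ) (hx : 0 ≤ x) : x / (1 + x) ≤ Real.exp (-(1 / (1 + x))) := by
  have h1 : (0:ℝ) < 1 + x := by linarith
  have h2 : -(1 / (1 + x)) + 1 ≤ Real.exp (-(1 / (1 + x))) := Real.add_one_le_exp _
  have h3 : x / (1 + x) = -(1 / (1 + x)) + 1 := by field_simp; ring
  linarith [h3 ▸ h2]

lemma prod_le_exp_sum (a phi : ℝ) (ha : 0 ≤ a) (hphi : 0 ≤ phi) (n : ℕ) :
    ∏ i ∈ Icc 1 n, (i * phi + a) / (1 + i * phi + a)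
      ≤ Real.exp (-(∑ i ∈ Icc 1 n, 1 / (1 + i * phi + a))) := by
  have h : Real.exp (-(∑ i ∈ Icc 1 n, 1 / (1 + i * phi + a)))
      = ∏ i ∈ Icc 1 n, Real.exp (-(1 / (1 + i * phi + a))) := by
    rw [← Real.exp_sum]
    congr 1
    rw [← Finset.sum_neg_distrib]
  rw [h]
  apply Finset.prod_le_prod
  · intro i _
    have hx : (0:ℝ) ≤ i * phi + a := by positivity
    positivity
  · intro i _
    have hx : (0:ℝ) ≤ i * phi + a := by positivity
    have h2 := factor_le_exp (i * phi + a) hx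
    calc (i * phi + a) / (1 + i * phi + a) = (i * phi + a) / (1 + (i * phi + a)) := by ring_nf
    _ ≤ Real.exp (-(1 / (1 + (i * phi + a)))) := h2
    _ = Real.exp (-(1 / (1 + i * phi + a))) := by ring_nf

lemma sum_ge_log (a phi : ℝ) (ha : 0 ≤ a) (hphi : 0 < phi) (n : ℕ) :
    (Real.log (1 + (n + 1) * phi + a) - Real.log (1 + phi + a)) / phi
      ≤ ∑ i ∈ Icc 1 n, 1 / (1 + i * phi + a) := by
  induction n with
  | zero => simp
  | succ n ih =>
    rw [Finset.sum_Icc_succ_top (by omega)]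
    have hx : (0:ℝ) < 1 + ((n:ℝ) + 1) * phi + a := by positivity
    have hy : (0:ℝ) < 1 + ((n:ℝ) + 1 + 1) * phi + a := by positivity
    have hlog : Real.log (1 + ((n:ℝ) + 1 + 1) * phi + a) - Real.log (1 + ((n:ℝ)+1) * phi + a)
        ≤ phi / (1 + ((n:ℝ)+1) * phi + a) := by
      have h := Real.log_le_sub_one_of_pos (div_pos hy hx)
      rw [Real.log_div (ne_of_gt hy) (ne_of_gt hx)] at h
      have heq : (1 + ((n:ℝ)+1+1)*phi + a) / (1 + ((n:ℝ)+1)*phi + a) - 1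
          = phi / (1 + ((n:ℝ)+1)*phi + a) := by field_simp; ring
      linarith [heq ▸ h]
    have step : (Real.log (1 + ((n:ℝ)+1+1) * phi + a) - Real.log (1 + ((n:ℝ)+1) * phi + a)) / phi
        ≤ 1 / (1 + ((n:ℝ)+1) * phi + a) := by
      rw [show (1:ℝ) / (1 + ((n:ℝ)+1)*phi + a) = (phi / (1 + ((n:ℝ)+1)*phi + a)) / phi by
        field_simp]
      gcongr
    have expand : (Real.log (1 + ((n:ℝ)+1+1) * phi + a) - Real.log (1 + phi + a)) / phi
        = (Real.log (1 + ((n:ℝ)+1+1) * phi + a) - Real.log (1 + ((n:ℝ)+1) * phi + a)) / phi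
          + (Real.log (1 + ((n:ℝ)+1) * phi + a) - Real.log (1 + phi + a)) / phi := by
      ring
    push_cast
    linarith

lemma case_pos_bound (phi A β : ℝ) (hphi0 : 0 < phi) (hA0 : 0 < A) (hβ0 : 0 ≤ β)
    (N : ℕ) (hN : 1 ≤ N) (a : ℝ) (ha0 : 0 ≤ a) (haA : a ≤ A * (N:ℝ) ^ β) :
    a * ∏ i ∈ Icc 1 (N - 1), (i * phi + a) / (1 + i * phi + a)
      ≤ (A * ((1 + phi + A) / phi) ^ (1/phi)) * (N:ℝ) ^ (β + (β - 1) / phi) := by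
  have hN1 : (1:ℝ) ≤ (N:ℝ) := by exact_mod_cast hN
  have hN0 : (0:ℝ) < (N:ℝ) := by linarith
  have hNβ1 : (1:ℝ) ≤ (N:ℝ) ^ β := Real.one_le_rpow hN1 hβ0
  have hcast : ((N - 1 : ℕ) : ℝ) + 1 = (N:ℝ) := by
    rw [Nat.cast_sub hN]; push_cast; ring
  have hsum := sum_ge_log a phi ha0 hphi0 (N-1)
  rw [hcast] at hsum
  have hprod := prod_le_exp_sum a phi ha0 hphi0.le (N-1)
  have hx : (0:ℝ) < 1 + phi + a := by linarith
  have hy : (0:ℝ) < 1 + (N:ℝ) * phi + a := by positivity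
  have hexp : Real.exp (-(∑ i ∈ Icc 1 (N-1), 1 / (1 + i * phi + a)))
      ≤ Real.exp (-((Real.log (1 + (N:ℝ) * phi + a) - Real.log (1 + phi + a)) / phi)) :=
    Real.exp_le_exp.2 (by linarith)
  have hrpow : Real.exp (-((Real.log (1 + (N:ℝ) * phi + a) - Real.log (1 + phi + a)) / phi))
      = ((1 + phi + a) / (1 + (N:ℝ) * phi + a)) ^ (1/phi) := by
    rw [Real.rpow_def_of_pos (div_pos hx hy), Real.log_div (ne_of_gt hx) (ne_of_gt hy)]
    ring_nf
  have hratio : (1 + phi + a) / (1 + (N:ℝ) * phi + a)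
      ≤ ((1 + phi + A) / phi) * (N:ℝ) ^ (β - 1) := by
    have hnum : 1 + phi + a ≤ (1 + phi + A) * (N:ℝ)^β := by nlinarith
    have hden : phi * (N:ℝ) ≤ 1 + (N:ℝ) * phi + a := by nlinarith
    calc (1 + phi + a) / (1 + (N:ℝ) * phi + a)
        ≤ ((1 + phi + A) * (N:ℝ)^β) / (phi * (N:ℝ)) :=
          div_le_div₀ (by positivity) hnum (by positivity) hden
    _ = ((1 + phi + A) / phi) * ((N:ℝ)^β / (N:ℝ)) := by ring
    _ = ((1 + phi + A) / phi) * (N:ℝ) ^ (β - 1) := by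
          rw [Real.rpow_sub hN0, Real.rpow_one]
  have hfinal : ((1 + phi + a) / (1 + (N:ℝ) * phi + a)) ^ (1/phi)
      ≤ (((1 + phi + A) / phi) * (N:ℝ) ^ (β - 1)) ^ (1/phi) :=
    Real.rpow_le_rpow (by positivity) hratio (by positivity)
  have hsplit : (((1 + phi + A) / phi) * (N:ℝ) ^ (β - 1)) ^ (1/phi)
      = ((1 + phi + A) / phi) ^ (1/phi) * (N:ℝ) ^ ((β - 1) / phi) := by
    rw [Real.mul_rpow (by positivity) (by positivity), ← Real.rpow_mul hN0.le,
      mul_one_div]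
  have hcombine : a * ∏ i ∈ Icc 1 (N - 1), (i * phi + a) / (1 + i * phi + a)
      ≤ (A * (N:ℝ)^β) * (((1 + phi + A) / phi) ^ (1/phi) * (N:ℝ) ^ ((β - 1) / phi)) := by
    have hprodnn : (0:ℝ) ≤ ∏ i ∈ Icc 1 (N - 1), (i * phi + a) / (1 + i * phi + a) := by
      apply Finset.prod_nonneg
      intro i _
      have h1 : (0:ℝ) ≤ (i:ℝ) * phi + a := by positivity
      have h2 : (0:ℝ) < 1 + (i:ℝ) * phi + a := by linarith
      positivity
    have hp2 : ∏ i ∈ Icc 1 (N - 1), (i * phi + a) / (1 + i * phi + a)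
        ≤ ((1 + phi + A) / phi) ^ (1/phi) * (N:ℝ) ^ ((β - 1) / phi) := by
      calc ∏ i ∈ Icc 1 (N - 1), (i * phi + a) / (1 + i * phi + a)
          ≤ _ := hprod
      _ ≤ _ := hexp
      _ = _ := hrpow
      _ ≤ _ := hfinal
      _ = _ := hsplit
    exact mul_le_mul haA hp2 hprodnn (by positivity)
  calc a * ∏ i ∈ Icc 1 (N - 1), (i * phi + a) / (1 + i * phi + a)
      ≤ (A * (N:ℝ)^β) * (((1 + phi + A) / phi) ^ (1/phi) * (N:ℝ) ^ ((β - 1) / phi)) := hcombine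
  _ = (A * ((1 + phi + A) / phi) ^ (1/phi)) * ((N:ℝ)^β * (N:ℝ) ^ ((β - 1) / phi)) := by ring
  _ = (A * ((1 + phi + A) / phi) ^ (1/phi)) * (N:ℝ) ^ (β + (β - 1) / phi) := by
      rw [← Real.rpow_add hN0]

lemma case_zero_bound (A β : ℝ) (hA0 : 0 < A) (hβ0 : 0 ≤ β) (hβ1 : β < 1)
    (N : ℕ) (hN : 2 ≤ N) (a : ℝ) (ha0 : 0 ≤ a) (haA : a ≤ A * (N:ℝ) ^ β) :
    a * ∏ i ∈ Icc 1 (N - 1), (i * (0:ℝ) + a) / (1 + i * 0 + a)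
      ≤ A * (((N:ℝ) ^ (1 - β)) ^ (β / (1 - β))
          * Real.exp (-(1 / (2 * (1 + A))) * (N:ℝ) ^ (1 - β))) := by
  have hN1 : (2:ℝ) ≤ (N:ℝ) := by exact_mod_cast hN
  have hN0 : (0:ℝ) < (N:ℝ) := by linarith
  have hNβ1 : (1:ℝ) ≤ (N:ℝ) ^ β := Real.one_le_rpow (by linarith) hβ0
  have hprod := prod_le_exp_sum a 0 ha0 le_rfl (N-1)
  have hsumeq : ∑ i ∈ Icc 1 (N-1), 1 / (1 + (i:ℝ) * 0 + a) = ((N-1:ℕ):ℝ) / (1+a) := by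
    rw [Finset.sum_congr rfl (fun i _ => by ring_nf : ∀ i ∈ Icc 1 (N-1),
        1 / (1 + (i:ℝ) * 0 + a) = 1/(1+a))]
    rw [Finset.sum_const, Nat.card_Icc]
    simp [nsmul_eq_mul]
    ring
  have hcast : ((N - 1 : ℕ) : ℝ) = (N:ℝ) - 1 := by
    rw [Nat.cast_sub (by omega)]; push_cast; ring
  have hsumge : (1 / (2 * (1 + A))) * (N:ℝ) ^ (1 - β) ≤ ((N-1:ℕ):ℝ) / (1+a) := by
    rw [hcast]
    have hden : 1 + a ≤ (1 + A) * (N:ℝ)^β := by nlinarith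
    have hnum : (N:ℝ) / 2 ≤ (N:ℝ) - 1 := by linarith
    calc (1 / (2 * (1 + A))) * (N:ℝ) ^ (1 - β)
        = ((N:ℝ) / 2) / ((1 + A) * (N:ℝ)^β) := by
          rw [Real.rpow_sub hN0, Real.rpow_one]
          have hb0 : (N:ℝ)^β ≠ 0 := by positivity
          field_simp
    _ ≤ ((N:ℝ) - 1) / (1 + a) := div_le_div₀ (by linarith) hnum (by positivity) hden
  have hexp : Real.exp (-(∑ i ∈ Icc 1 (N-1), 1 / (1 + (i:ℝ) * 0 + a)))
      ≤ Real.exp (-(1 / (2 * (1 + A))) * (N:ℝ) ^ (1 - β)) := by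
    rw [hsumeq]
    apply Real.exp_le_exp.2
    linarith
  have hNβeq : (N:ℝ)^β = ((N:ℝ) ^ (1 - β)) ^ (β / (1 - β)) := by
    rw [← Real.rpow_mul hN0.le]
    congr 1
    rw [mul_comm, div_mul_cancel₀ β (by linarith : (1:ℝ)-β ≠ 0)]
  have hprodnn : (0:ℝ) ≤ ∏ i ∈ Icc 1 (N - 1), ((i:ℝ) * 0 + a) / (1 + i * 0 + a) := by
    apply Finset.prod_nonneg
    intro i _
    have h2 : (0:ℝ) < 1 + (i:ℝ) * 0 + a := by linarith
    positivity
  calc a * ∏ i ∈ Icc 1 (N - 1), ((i:ℝ) * 0 + a) / (1 + i * 0 + a)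
      ≤ (A * (N:ℝ)^β) * Real.exp (-(1 / (2 * (1 + A))) * (N:ℝ) ^ (1 - β)) := by
        exact mul_le_mul haA (hprod.trans hexp) hprodnn (by positivity)
  _ = A * ((N:ℝ)^β * Real.exp (-(1 / (2 * (1 + A))) * (N:ℝ) ^ (1 - β))) := by ring
  _ = _ := by rw [hNβeq]

/-- Concrete instance of Corollary 1: for a polynomial external birth rate
`λ(N) = c N^b` with `c > 0` and `b < 1/(1+φ)`, the mean offspring number
`m(N) = 2dλ(N) ∏_{i=1}^{N-1} (iφ+2dλ(N))/(1+iφ+2dλ(N))` tends to `0` as `N → ∞`;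
in particular it is eventually below `1`. -/
theorem mean_offspring_polynomial_rate
    (d : ℕ) (hd : 1 ≤ d) (phi : ℝ) (hphi : 0 ≤ phi)
    (c b : ℝ) (hc : 0 < c) (hb : b < 1 / (1 + phi))
    (lam : ℕ → ℝ) (hlamdef : ∀ N : ℕ, lam N = c * (N : ℝ) ^ b) :
    Tendsto (fun N : ℕ =>
        2 * d * lam N * ∏ i ∈ Finset.Icc 1 (N - 1),
          (i * phi + 2 * d * lam N) / (1 + i * phi + 2 * d * lam N))
      atTop (nhds 0) ∧
    ∀ᶠ N : ℕ in atTop,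
        2 * d * lam N * ∏ i ∈ Finset.Icc 1 (N - 1),
          (i * phi + 2 * d * lam N) / (1 + i * phi + 2 * d * lam N) < 1 := by
  have hphi1 : (0:ℝ) < 1 + phi := by linarith
  have hd' : (0:ℝ) < d := by exact_mod_cast Nat.lt_of_lt_of_le Nat.zero_lt_one hd
  have hA0 : (0:ℝ) < 2 * d * c := by positivity
  have hβ0 : (0:ℝ) ≤ max b 0 := le_max_right _ _
  have hβlt : max b 0 < 1 / (1 + phi) := max_lt hb (by positivity)
  have hβ1 : max b 0 < 1 := lt_of_lt_of_le hβlt (by rw [div_le_one hphi1]; linarith)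
  have hanneg : ∀ N : ℕ, 0 ≤ 2 * d * lam N := by
    intro N; rw [hlamdef]; positivity
  have hmnonneg : ∀ N : ℕ, 0 ≤ 2 * d * lam N * ∏ i ∈ Finset.Icc 1 (N - 1),
      (i * phi + 2 * d * lam N) / (1 + i * phi + 2 * d * lam N) := by
    intro N
    apply mul_nonneg (hanneg N)
    apply Finset.prod_nonneg
    intro i _
    have h0 := hanneg N
    have h1 : (0:ℝ) ≤ i * phi + 2 * d * lam N := by positivity
    have h2 : (0:ℝ) < 1 + i * phi + 2 * d * lam N := by linarith
    positivity
  have ha_le : ∀ N : ℕ, 1 ≤ N → 2 * d * lam N ≤ 2 * d * c * (N:ℝ) ^ (max b 0) := by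
    intro N hN
    rw [hlamdef]
    have hN1 : (1:ℝ) ≤ (N:ℝ) := by exact_mod_cast hN
    have h1 : (N:ℝ) ^ b ≤ (N:ℝ) ^ (max b 0) :=
      Real.rpow_le_rpow_of_exponent_le hN1 (le_max_left _ _)
    calc 2 * (d:ℝ) * (c * (N:ℝ)^b) = 2*d*c * (N:ℝ)^b := by ring
    _ ≤ 2*(d:ℝ)*c * (N:ℝ)^(max b 0) := by
        apply mul_le_mul_of_nonneg_left h1; positivity
  have key : Tendsto (fun N : ℕ =>
      2 * d * lam N * ∏ i ∈ Finset.Icc 1 (N - 1),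
        (i * phi + 2 * d * lam N) / (1 + i * phi + 2 * d * lam N)) atTop (nhds 0) := by
    rcases eq_or_lt_of_le hphi with hphi0 | hphi0
    · -- phi = 0
      subst hphi0
      apply squeeze_zero' (Eventually.of_forall hmnonneg)
        (g := fun N : ℕ => 2*d*c * (((N:ℝ) ^ (1 - max b 0)) ^ ((max b 0) / (1 - max b 0))
          * Real.exp (-(1 / (2 * (1 + 2*d*c))) * (N:ℝ) ^ (1 - max b 0))))
      · filter_upwards [eventually_ge_atTop 2] with N hN
        exact case_zero_bound (2*d*c) (max b 0) hA0 hβ0 hβ1 N hN _ (hanneg N)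
          (ha_le N (by omega))
      · have h1 := tendsto_rpow_mul_exp_neg_mul_atTop_nhds_zero
          ((max b 0) / (1 - max b 0)) (1 / (2 * (1 + 2*(d:ℝ)*c))) (by positivity)
        have h2 : Tendsto (fun N : ℕ => (N:ℝ) ^ (1 - max b 0)) atTop atTop :=
          (tendsto_rpow_atTop (by linarith)).comp tendsto_natCast_atTop_atTop
        have h3 := (h1.comp h2).const_mul (2*(d:ℝ)*c)
        simpa using h3
    · -- phi > 0
      have he0 : max b 0 + (max b 0 - 1) / phi < 0 := by
        have h : max b 0 + (max b 0 - 1) / phi = ((max b 0) * (1 + phi) - 1) / phi := by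
          field_simp; ring
        rw [h]
        apply div_neg_of_neg_of_pos _ hphi0
        have := (lt_div_iff₀ hphi1).1 hβlt
        linarith
      apply squeeze_zero' (Eventually.of_forall hmnonneg)
        (g := fun N : ℕ => (2*d*c * ((1 + phi + 2*d*c) / phi) ^ (1/phi))
          * (N:ℝ) ^ (max b 0 + (max b 0 - 1) / phi))
      · filter_upwards [eventually_ge_atTop 1] with N hN
        exact case_pos_bound phi (2*d*c) (max b 0) hphi0 hA0 hβ0 N hN _ (hanneg N)
          (ha_le N hN)
      · have h1 : Tendsto (fun x:ℝ => x ^ (max b 0 + (max b 0 - 1) / phi)) atTop (nhds 0) := by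
          have := tendsto_rpow_neg_atTop (show (0:ℝ) < -(max b 0 + (max b 0 - 1) / phi) by linarith)
          simpa using this
        have h3 := (h1.comp tendsto_natCast_atTop_atTop).const_mul
          (2*(d:ℝ)*c * ((1 + phi + 2*(d:ℝ)*c) / phi) ^ (1/phi))
        simpa using h3
  exact ⟨key, key.eventually_lt_const one_pos⟩
end

section
/- For φ > 0, d ≥ 1, λ > 0, and N ≥ 2, the following lower bound on the log of the product holds: ln ∏_{i=1}^{N-1} (1 + iφ + 2dλ)/(iφ + 2dλ) = Σ_{i=1}^{N-1} ln(1 + 1/(iφ + 2dλ)) ≥ (1/(2φ)) · ln((1 + (N−1)φ/(1+2dλ))) − C for some constant C depending only on φ, d, λ; consequently ∏_{i=1}^{N-1} (iφ+2dλ)/(1+iφ+2dλ) ≤ C' · (1 + (N−1)φ)^{−1/(2φ)} for suitable C' > 0. -/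
private lemma tel_sum (F : ℕ → ℝ) (m n : ℕ) (h : m ≤ n) :
    ∑ i ∈ Finset.Ico m n, (F (i + 1) - F i) = F n - F m := by
  rw [Finset.sum_Ico_eq_sub _ h, Finset.sum_range_sub, Finset.sum_range_sub]
  ring

set_option maxHeartbeats 1000000 in
/-- Quantitative decay of the survival probability `P(A)`: for `φ > 0` there are
constants `C` (and `C' > 0`) depending only on `φ, d, λ` such that for all `N ≥ 2`,
`ln ∏_{i=1}^{N-1} (1+iφ+2dλ)/(iφ+2dλ) = Σ_{i=1}^{N-1} ln(1 + 1/(iφ+2dλ))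
  ≥ (1/(2φ)) ln(1 + (N−1)φ/(1+2dλ)) − C`,
and consequently
`∏_{i=1}^{N-1} (iφ+2dλ)/(1+iφ+2dλ) ≤ C' (1+(N−1)φ)^{−1/(2φ)}`. -/
theorem survival_probability_polynomial_decay
    (d : ℕ) (hd : 1 ≤ d) (phi lam : ℝ) (hphi : 0 < phi) (hlam : 0 < lam) :
    ∃ C C' : ℝ, 0 < C' ∧ ∀ N : ℕ, 2 ≤ N →
      (Real.log (∏ i ∈ Finset.Icc 1 (N - 1),
          (1 + i * phi + 2 * d * lam) / (i * phi + 2 * d * lam))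
        = ∑ i ∈ Finset.Icc 1 (N - 1), Real.log (1 + 1 / (i * phi + 2 * d * lam))) ∧
      ((1 / (2 * phi)) * Real.log (1 + (N - 1) * phi / (1 + 2 * d * lam)) - C
        ≤ ∑ i ∈ Finset.Icc 1 (N - 1), Real.log (1 + 1 / (i * phi + 2 * d * lam))) ∧
      (∏ i ∈ Finset.Icc 1 (N - 1),
          (i * phi + 2 * d * lam) / (1 + i * phi + 2 * d * lam)
        ≤ C' * (1 + (N - 1) * phi) ^ (-(1 / (2 * phi)))) := by
  have hd' : (1 : ℝ) ≤ (d : ℝ) := by exact_mod_cast hd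
  set a : ℝ := 2 * d * lam with ha_def
  have ha : 0 < a := by
    have : (0:ℝ) < 2 * d := by nlinarith
    exact mul_pos this hlam
  -- x_i := i*phi + a is positive
  have hx : ∀ i : ℕ, 0 < (i : ℝ) * phi + a := fun i => by positivity
  -- each summand is nonnegative
  have hf0 : ∀ i : ℕ, 0 ≤ Real.log (1 + 1 / ((i : ℝ) * phi + a)) := fun i => by
    apply Real.log_nonneg
    have := (hx i).le
    have h1 : 0 ≤ 1 / ((i : ℝ) * phi + a) := by positivity
    linarith
  -- the index from which i*phi + a ≥ 1
  set i₀ : ℕ := ⌈1 / phi⌉₊ with hi₀_def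
  have hi₀ : (1 : ℝ) ≤ (i₀ : ℝ) * phi := by
    have h1 : (1 / phi : ℝ) ≤ (i₀ : ℝ) := Nat.le_ceil _
    calc (1:ℝ) = (1/phi) * phi := by field_simp
    _ ≤ (i₀ : ℝ) * phi := by nlinarith
  -- key pointwise bound for i ≥ i₀
  have hkey : ∀ i : ℕ, i₀ ≤ i →
      (1 / (2 * phi)) * (Real.log (((i:ℝ)+1) * phi + a) - Real.log ((i:ℝ) * phi + a))
        ≤ Real.log (1 + 1 / ((i : ℝ) * phi + a)) := by
    intro i hi
    set x : ℝ := (i : ℝ) * phi + a with hx_def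
    have hxpos : 0 < x := hx i
    have hx1 : 1 ≤ x := by
      have : (i₀ : ℝ) ≤ (i : ℝ) := by exact_mod_cast hi
      have : (i₀ : ℝ) * phi ≤ (i : ℝ) * phi := by nlinarith
      nlinarith
    -- upper bound for the log difference
    have hlogdiff : Real.log (((i:ℝ)+1) * phi + a) - Real.log x ≤ phi / x := by
      have hq : Real.log (((i:ℝ)+1) * phi + a) - Real.log x
          = Real.log ((((i:ℝ)+1) * phi + a) / x) := by
        rw [Real.log_div (by positivity) (ne_of_gt hxpos)]
      rw [hq]
      have hval : (((i:ℝ)+1) * phi + a) / x = 1 + phi / x := by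
        field_simp [hx_def]; ring
      rw [hval]
      have := Real.log_le_sub_one_of_pos (show (0:ℝ) < 1 + phi / x by positivity)
      linarith
    -- lower bound for log(1 + 1/x)
    have hloglow : 1 / (x + 1) ≤ Real.log (1 + 1 / x) := by
      have hinv : (0:ℝ) < (1 + 1/x)⁻¹ := by positivity
      have h2 := Real.log_le_sub_one_of_pos hinv
      rw [Real.log_inv] at h2
      have hval : (1 + 1/x)⁻¹ = x / (x + 1) := by
        field_simp
      rw [hval] at h2
      have : 1 - x / (x+1) = 1 / (x+1) := by field_simp; ring
      linarith
    have h12 : 1 / (2 * x) ≤ 1 / (x + 1) := by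
      apply one_div_le_one_div_of_le (by positivity)
      linarith
    have hup : (1 / (2 * phi)) * (Real.log (((i:ℝ)+1) * phi + a) - Real.log x)
        ≤ 1 / (2 * x) := by
      have h1 : (0:ℝ) < 1 / (2*phi) := by positivity
      have := mul_le_mul_of_nonneg_left hlogdiff h1.le
      calc (1 / (2 * phi)) * (Real.log (((i:ℝ)+1) * phi + a) - Real.log x)
          ≤ (1 / (2*phi)) * (phi / x) := this
        _ = 1 / (2 * x) := by field_simp
    linarith
  -- constants
  set C₁ : ℝ := (1 / (2*phi)) *
    (Real.log (1 + 1/(2*phi + a)) + Real.log ((i₀:ℝ)*phi + a) - Real.log (1 + a)) with hC₁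
  set C₂ : ℝ := (1 / (2*phi)) * Real.log (1 + (i₀:ℝ)*phi/(1+a)) with hC₂
  have hC₂0 : 0 ≤ C₂ := by
    apply mul_nonneg (by positivity)
    apply Real.log_nonneg
    have : 0 ≤ (i₀:ℝ)*phi/(1+a) := by positivity
    linarith
  have hC₁0 : 0 ≤ C₁ := by
    apply mul_nonneg (by positivity)
    have h1 : 0 ≤ Real.log (1 + 1/(2*phi + a)) := by
      apply Real.log_nonneg
      have : 0 ≤ 1/(2*phi+a) := by positivity
      linarith
    have h2 : Real.log (1 + a) ≤ Real.log ((i₀:ℝ)*phi + a) := by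
      apply Real.log_le_log (by positivity)
      linarith [hi₀]
    linarith
  refine ⟨C₁ + C₂, Real.exp (C₁ + C₂) * (1 + a) ^ (1/(2*phi)), by positivity, ?_⟩
  intro N hN
  have hN1 : 1 ≤ N - 1 := by omega
  have hNr : (1:ℝ) ≤ (N:ℝ) - 1 := by
    have : (2:ℝ) ≤ (N:ℝ) := by exact_mod_cast hN
    linarith
  -- first claim: log of product = sum of logs
  have hterm : ∀ i : ℕ, (1 + (i:ℝ) * phi + a) / ((i:ℝ) * phi + a)
      = 1 + 1 / ((i:ℝ) * phi + a) := by
    intro i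
    have h := hx i
    field_simp
    ring
  have hclaim1 : Real.log (∏ i ∈ Finset.Icc 1 (N - 1),
        (1 + (i:ℝ) * phi + a) / ((i:ℝ) * phi + a))
      = ∑ i ∈ Finset.Icc 1 (N - 1), Real.log (1 + 1 / ((i:ℝ) * phi + a)) := by
    rw [Real.log_prod]
    · exact Finset.sum_congr rfl fun i _ => by rw [hterm]
    · intro i _
      rw [hterm]
      have h1 : 0 < 1 / ((i:ℝ)*phi + a) := by positivity
      positivity
  -- second claim
  have hclaim2 : (1 / (2 * phi)) * Real.log (1 + ((N:ℝ) - 1) * phi / (1 + a)) - (C₁ + C₂)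
      ≤ ∑ i ∈ Finset.Icc 1 (N - 1), Real.log (1 + 1 / ((i:ℝ) * phi + a)) := by
    by_cases hcase : i₀ ≤ N - 1
    · -- main case: telescoping lower bound
      have hi₀pos : 0 < i₀ := Nat.ceil_pos.mpr (by positivity)
      have hsub : Finset.Icc i₀ (N-1) ⊆ Finset.Icc 1 (N-1) :=
        Finset.Icc_subset_Icc (by omega) le_rfl
      have hstep1 : ∑ i ∈ Finset.Icc i₀ (N-1), Real.log (1 + 1 / ((i:ℝ) * phi + a))
          ≤ ∑ i ∈ Finset.Icc 1 (N - 1), Real.log (1 + 1 / ((i:ℝ) * phi + a)) :=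
        Finset.sum_le_sum_of_subset_of_nonneg hsub (fun i _ _ => hf0 i)
      have hstep2 : ∑ i ∈ Finset.Icc i₀ (N-1),
            (1 / (2 * phi)) * (Real.log (((i:ℝ)+1) * phi + a) - Real.log ((i:ℝ) * phi + a))
          ≤ ∑ i ∈ Finset.Icc i₀ (N-1), Real.log (1 + 1 / ((i:ℝ) * phi + a)) := by
        apply Finset.sum_le_sum
        intro i hi
        exact hkey i (Finset.mem_Icc.mp hi).1
      -- telescope
      have htel : ∑ i ∈ Finset.Icc i₀ (N-1),
            (Real.log (((i:ℝ)+1) * phi + a) - Real.log ((i:ℝ) * phi + a))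
          = Real.log ((N:ℝ) * phi + a) - Real.log ((i₀:ℝ) * phi + a) := by
        have hIcc : Finset.Icc i₀ (N-1) = Finset.Ico i₀ N := by
          ext x
          simp only [Finset.mem_Icc, Finset.mem_Ico]
          omega
        rw [hIcc]
        have key := tel_sum (fun j : ℕ => Real.log ((j:ℝ) * phi + a)) i₀ N (by omega)
        rw [← key]
        apply Finset.sum_congr rfl
        intro i _
        push_cast
        all_goals ring_nf
      rw [← Finset.mul_sum, htel] at hstep2
      -- compare with target
      have hfinal : (1 / (2 * phi)) * Real.log (1 + ((N:ℝ) - 1) * phi / (1 + a)) - (C₁ + C₂)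
          ≤ (1 / (2*phi)) * (Real.log ((N:ℝ) * phi + a) - Real.log ((i₀:ℝ) * phi + a)) := by
        have hlogs : Real.log (1 + ((N:ℝ) - 1) * phi / (1 + a)) + Real.log (1 + a)
            ≤ Real.log ((N:ℝ) * phi + a) + Real.log (1 + 1/(2*phi + a)) := by
          have e1 : Real.log (1 + ((N:ℝ) - 1) * phi / (1 + a)) + Real.log (1 + a)
              = Real.log ((1 + ((N:ℝ) - 1) * phi / (1 + a)) * (1 + a)) := by
            rw [Real.log_mul (by positivity) (by positivity)]
          have e2 : (1 + ((N:ℝ) - 1) * phi / (1 + a)) * (1 + a)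
              = 1 + a + ((N:ℝ) - 1) * phi := by
            field_simp
            all_goals ring
          have e3 : Real.log ((N:ℝ) * phi + a) + Real.log (1 + 1/(2*phi + a))
              = Real.log (((N:ℝ) * phi + a) * (1 + 1/(2*phi + a))) := by
            rw [Real.log_mul (by positivity) (by positivity)]
          rw [e1, e2, e3]
          apply Real.log_le_log (by positivity)
          have hNphi : 2 * phi ≤ (N:ℝ) * phi := by nlinarith
          have h4 : 1 ≤ ((N:ℝ) * phi + a) / (2*phi + a) := by
            rw [le_div_iff₀ (by positivity)]
            linarith
          have h5 : ((N:ℝ) * phi + a) * (1 + 1/(2*phi + a))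
              = ((N:ℝ) * phi + a) + ((N:ℝ) * phi + a) / (2*phi + a) := by
            field_simp
          rw [h5]
          nlinarith
        rw [hC₁]
        have hphi2 : (0:ℝ) < 1 / (2*phi) := by positivity
        have := mul_le_mul_of_nonneg_left (by linarith [hlogs] :
          Real.log (1 + ((N:ℝ) - 1) * phi / (1 + a))
            - (Real.log (1 + 1/(2*phi + a)) + Real.log ((i₀:ℝ)*phi + a) - Real.log (1 + a))
          ≤ Real.log ((N:ℝ) * phi + a) - Real.log ((i₀:ℝ) * phi + a)) hphi2.le
        rw [mul_sub] at this
        linarith [hC₂0]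
      linarith
    · -- small N case: sum is nonnegative, RHS is ≤ 0
      have hsumnn : 0 ≤ ∑ i ∈ Finset.Icc 1 (N - 1),
          Real.log (1 + 1 / ((i:ℝ) * phi + a)) :=
        Finset.sum_nonneg fun i _ => hf0 i
      have hNi₀ : ((N:ℝ) - 1) ≤ (i₀:ℝ) := by
        have : N - 1 ≤ i₀ := by omega
        have h2 : ((N-1 : ℕ) : ℝ) ≤ (i₀:ℝ) := by exact_mod_cast this
        have h3 : ((N-1 : ℕ) : ℝ) = (N:ℝ) - 1 := by
          have : (1:ℕ) ≤ N := by omega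
          push_cast [this]; ring
        linarith [h3 ▸ h2]
      have hmono : Real.log (1 + ((N:ℝ) - 1) * phi / (1 + a))
          ≤ Real.log (1 + (i₀:ℝ)*phi/(1+a)) := by
        apply Real.log_le_log (by positivity)
        have : ((N:ℝ) - 1) * phi ≤ (i₀:ℝ) * phi := by nlinarith
        have h2 : ((N:ℝ) - 1) * phi / (1+a) ≤ (i₀:ℝ) * phi / (1+a) :=
          (div_le_div_iff_of_pos_right (by positivity)).mpr this
        linarith
      have : (1 / (2 * phi)) * Real.log (1 + ((N:ℝ) - 1) * phi / (1 + a)) ≤ C₂ := by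
        rw [hC₂]
        apply mul_le_mul_of_nonneg_left hmono (by positivity)
      linarith
  refine ⟨hclaim1, hclaim2, ?_⟩
  -- third claim
  set S := ∑ i ∈ Finset.Icc 1 (N - 1), Real.log (1 + 1 / ((i:ℝ) * phi + a)) with hS
  have hQpos : 0 < ∏ i ∈ Finset.Icc 1 (N - 1),
      (1 + (i:ℝ) * phi + a) / ((i:ℝ) * phi + a) := by
    apply Finset.prod_pos
    intro i _
    have := hx i
    have h1 : 0 < 1 + (i:ℝ)*phi + a := by positivity
    positivity
  have hPQ : ∏ i ∈ Finset.Icc 1 (N - 1), ((i:ℝ) * phi + a) / (1 + (i:ℝ) * phi + a)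
      = (∏ i ∈ Finset.Icc 1 (N - 1), (1 + (i:ℝ) * phi + a) / ((i:ℝ) * phi + a))⁻¹ := by
    rw [← Finset.prod_inv_distrib]
    apply Finset.prod_congr rfl
    intro i _
    rw [inv_div]
  have hQ : ∏ i ∈ Finset.Icc 1 (N - 1), (1 + (i:ℝ) * phi + a) / ((i:ℝ) * phi + a)
      = Real.exp S := by
    rw [← Real.exp_log hQpos, hclaim1]
  have hPexp : ∏ i ∈ Finset.Icc 1 (N - 1), ((i:ℝ) * phi + a) / (1 + (i:ℝ) * phi + a)
      = Real.exp (-S) := by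
    rw [hPQ, hQ, ← Real.exp_neg]
  rw [hPexp]
  have hrpow1 : (1 + a) ^ (1/(2*phi)) = Real.exp (Real.log (1+a) * (1/(2*phi))) :=
    Real.rpow_def_of_pos (by positivity) _
  have hrpow2 : (1 + ((N:ℝ) - 1) * phi) ^ (-(1 / (2 * phi)))
      = Real.exp (Real.log (1 + ((N:ℝ) - 1) * phi) * (-(1/(2*phi)))) :=
    Real.rpow_def_of_pos (by positivity) _
  rw [hrpow1, hrpow2, ← Real.exp_add, ← Real.exp_add]
  rw [Real.exp_le_exp]
  clear hPexp hPQ hQ hQpos hclaim1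
  -- need: -S ≤ C₁+C₂ + log(1+a)/(2phi) - log(1+(N-1)phi)/(2phi)
  have hlog3 : Real.log (1 + ((N:ℝ) - 1) * phi) - Real.log (1 + a)
      ≤ Real.log (1 + ((N:ℝ) - 1) * phi / (1 + a)) := by
    have e1 : Real.log (1 + a) + Real.log (1 + ((N:ℝ) - 1) * phi / (1 + a))
        = Real.log ((1 + a) * (1 + ((N:ℝ) - 1) * phi / (1 + a))) := by
      rw [Real.log_mul (by positivity) (by positivity)]
    have e2 : (1 + a) * (1 + ((N:ℝ) - 1) * phi / (1 + a)) = 1 + a + ((N:ℝ) - 1) * phi := by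
      field_simp
      all_goals ring
    have e3 : Real.log (1 + ((N:ℝ) - 1) * phi) ≤ Real.log (1 + a + ((N:ℝ) - 1) * phi) := by
      apply Real.log_le_log (by positivity)
      linarith
    rw [e2] at e1
    linarith
  have hmul := mul_le_mul_of_nonneg_left hlog3 (show (0:ℝ) ≤ 1/(2*phi) by positivity)
  rw [mul_sub] at hmul
  linarith [hclaim2, hmul]
end
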